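/- In any braided monoidal category C, every Yetter–Drinfel'd module over a bialgebra H in C is a strong Yetter–Drinfel'd module in the 2-category induced by C (with one 0-cell, objects of C as 1-cells, and morphisms of C as 2-cells), where the distributive laws τ are given by the braiding. -/

import Mathlib

open CategoryTheory Category MonoidalCategory

namespace Paper

variable {C : Type*} [Category C] [MonoidalCategory C] [BraidedCategory C]

/-- The distributive law `λ = (μ ⊗ id) ∘ (id ⊗ c_{H,H}) ∘ (Δ ⊗ id)` of the bimonad
induced by a bialgebra `H` in a braided category. -/
def bialgLam (H : C) (mul : H ⊗ H ⟶ H) (comul : H ⟶ H ⊗ H) : H ⊗ H ⟶ H ⊗ H :=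
  comul ▷ H ≫ (α_ H H H).hom ≫ H ◁ (β_ H H).hom ≫ (α_ H H H).inv ≫ mul ▷ H

/-- `ψ = (ν ⊗ id) ∘ (id ⊗ c_{H,X}) ∘ (Δ ⊗ id)`. -/
def ydPsi (H X : C) (comul : H ⟶ H ⊗ H) (ν : H ⊗ X ⟶ X) : H ⊗ X ⟶ X ⊗ H :=
  comul ▷ X ≫ (α_ H H X).hom ≫ H ◁ (β_ H X).hom ≫ (α_ H X H).inv ≫ ν ▷ H

/-- `φ = (μ ⊗ id) ∘ (id ⊗ c_{X,H}) ∘ (l ⊗ id)`. -/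
def ydPhi (H X : C) (mul : H ⊗ H ⟶ H) (l : X ⟶ H ⊗ X) : X ⊗ H ⟶ H ⊗ X :=
  l ▷ H ≫ (α_ H X H).hom ≫ H ◁ (β_ X H).hom ≫ (α_ H H X).inv ≫ mul ▷ X

open BraidedCategory

set_option maxHeartbeats 2000000

theorem psi_comul (H : C) (comul : H ⟶ H ⊗ H)
    (h_coassoc : comul ≫ comul ▷ H ≫ (α_ H H H).hom = comul ≫ H ◁ comul)
    (M : C) (f : H ⊗ M ⟶ M) :
    ydPsi H M comul f ≫ M ◁ comul =
      comul ▷ M ≫ (α_ H H M).hom ≫ H ◁ (β_ H M).hom ≫ (α_ H M H).inv ≫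
        ydPsi H M comul f ▷ H ≫ (α_ M H H).hom := by
  calc ydPsi H M comul f ≫ M ◁ comul
      = 𝟙 (H ⊗ M) ⊗≫ comul ▷ M ⊗≫ H ◁ (β_ H M).hom ⊗≫ (f ▷ H ≫ M ◁ comul) ⊗≫
          𝟙 (M ⊗ (H ⊗ H)) := by
        simp only [ydPsi]; monoidal
    _ = 𝟙 (H ⊗ M) ⊗≫ comul ▷ M ⊗≫ H ◁ ((β_ H M).hom ≫ M ◁ comul) ⊗≫ f ▷ (H ⊗ H) ⊗≫
          𝟙 (M ⊗ (H ⊗ H)) := by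
        rw [← whisker_exchange]; monoidal
    _ = 𝟙 (H ⊗ M) ⊗≫ (comul ≫ H ◁ comul) ▷ M ⊗≫ H ◁ (β_ (H ⊗ H) M).hom ⊗≫
          f ▷ (H ⊗ H) ⊗≫ 𝟙 (M ⊗ (H ⊗ H)) := by
        rw [← braiding_naturality_left]; monoidal
    _ = 𝟙 (H ⊗ M) ⊗≫ (comul ≫ comul ▷ H ≫ (α_ H H H).hom) ▷ M ⊗≫ H ◁ (β_ (H ⊗ H) M).hom ⊗≫
          f ▷ (H ⊗ H) ⊗≫ 𝟙 (M ⊗ (H ⊗ H)) := by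
        rw [h_coassoc]
    _ = 𝟙 (H ⊗ M) ⊗≫ comul ▷ M ⊗≫ (comul ▷ (H ⊗ M) ≫ (H ⊗ H) ◁ (β_ H M).hom) ⊗≫
          H ◁ (β_ H M).hom ▷ H ⊗≫ f ▷ H ▷ H ⊗≫ 𝟙 (M ⊗ (H ⊗ H)) := by
        rw [braiding_tensor_left_hom]; monoidal
    _ = 𝟙 (H ⊗ M) ⊗≫ comul ▷ M ⊗≫ (H ◁ (β_ H M).hom ≫ comul ▷ (M ⊗ H)) ⊗≫
          H ◁ (β_ H M).hom ▷ H ⊗≫ f ▷ H ▷ H ⊗≫ 𝟙 (M ⊗ (H ⊗ H)) := by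
        rw [whisker_exchange]
    _ = comul ▷ M ≫ (α_ H H M).hom ≫ H ◁ (β_ H M).hom ≫ (α_ H M H).inv ≫
        ydPsi H M comul f ▷ H ≫ (α_ M H H).hom := by
      simp only [ydPsi]; monoidal

theorem phi_mul (H : C) (mul : H ⊗ H ⟶ H)
    (h_assoc : (α_ H H H).inv ≫ mul ▷ H ≫ mul = H ◁ mul ≫ mul)
    (M : C) (g : M ⟶ H ⊗ M) :
    M ◁ mul ≫ ydPhi H M mul g =
      (α_ M H H).inv ≫ ydPhi H M mul g ▷ H ≫ (α_ H M H).hom ≫ H ◁ (β_ M H).hom ≫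
        (α_ H H M).inv ≫ mul ▷ M := by
  calc M ◁ mul ≫ ydPhi H M mul g
      = 𝟙 (M ⊗ (H ⊗ H)) ⊗≫ (M ◁ mul ≫ g ▷ H) ⊗≫ H ◁ (β_ M H).hom ⊗≫ mul ▷ M ⊗≫
          𝟙 (H ⊗ M) := by
        simp only [ydPhi]; monoidal
    _ = 𝟙 (M ⊗ (H ⊗ H)) ⊗≫ g ▷ (H ⊗ H) ⊗≫ H ◁ (M ◁ mul ≫ (β_ M H).hom) ⊗≫ mul ▷ M ⊗≫
          𝟙 (H ⊗ M) := by
        rw [whisker_exchange]; monoidal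
    _ = 𝟙 (M ⊗ (H ⊗ H)) ⊗≫ g ▷ (H ⊗ H) ⊗≫ H ◁ (β_ M (H ⊗ H)).hom ⊗≫
          (H ◁ mul ≫ mul) ▷ M ⊗≫ 𝟙 (H ⊗ M) := by
        rw [braiding_naturality_right]; monoidal
    _ = 𝟙 (M ⊗ (H ⊗ H)) ⊗≫ g ▷ (H ⊗ H) ⊗≫ H ◁ (β_ M (H ⊗ H)).hom ⊗≫
          ((α_ H H H).inv ≫ mul ▷ H ≫ mul) ▷ M ⊗≫ 𝟙 (H ⊗ M) := by
        rw [h_assoc]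
    _ = 𝟙 (M ⊗ (H ⊗ H)) ⊗≫ g ▷ (H ⊗ H) ⊗≫ H ◁ (β_ M H).hom ▷ H ⊗≫
          ((H ⊗ H) ◁ (β_ M H).hom ≫ mul ▷ (H ⊗ M)) ⊗≫ mul ▷ M ⊗≫ 𝟙 (H ⊗ M) := by
        rw [braiding_tensor_right_hom]; monoidal
    _ = 𝟙 (M ⊗ (H ⊗ H)) ⊗≫ g ▷ (H ⊗ H) ⊗≫ H ◁ (β_ M H).hom ▷ H ⊗≫
          (mul ▷ (M ⊗ H) ≫ H ◁ (β_ M H).hom) ⊗≫ mul ▷ M ⊗≫ 𝟙 (H ⊗ M) := by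
        rw [whisker_exchange]
    _ = (α_ M H H).inv ≫ ydPhi H M mul g ▷ H ≫ (α_ H M H).hom ≫ H ◁ (β_ M H).hom ≫
        (α_ H H M).inv ≫ mul ▷ M := by
      simp only [ydPhi]; monoidal

theorem lam_unit (H : C) (mul : H ⊗ H ⟶ H) (unit : 𝟙_ C ⟶ H) (comul : H ⟶ H ⊗ H)
    (h_ru : (ρ_ H).inv ≫ H ◁ unit ≫ mul = 𝟙 H) :
    (ρ_ H).inv ≫ H ◁ unit ≫ bialgLam H mul comul = comul := by
  calc (ρ_ H).inv ≫ H ◁ unit ≫ bialgLam H mul comul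
      = 𝟙 H ⊗≫ (H ◁ unit ≫ comul ▷ H) ⊗≫ H ◁ (β_ H H).hom ⊗≫ mul ▷ H ⊗≫ 𝟙 (H ⊗ H) := by
        simp only [bialgLam]; monoidal
    _ = 𝟙 H ⊗≫ comul ▷ 𝟙_ C ⊗≫ (H ⊗ H) ◁ unit ⊗≫ H ◁ (β_ H H).hom ⊗≫ mul ▷ H ⊗≫
          𝟙 (H ⊗ H) := by
        rw [whisker_exchange]; monoidal
    _ = 𝟙 H ⊗≫ comul ⊗≫ H ◁ (H ◁ unit ≫ (β_ H H).hom) ⊗≫ mul ▷ H ⊗≫ 𝟙 (H ⊗ H) := by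
        monoidal
    _ = 𝟙 H ⊗≫ comul ⊗≫ H ◁ ((β_ H (𝟙_ C)).hom ≫ unit ▷ H) ⊗≫ mul ▷ H ⊗≫ 𝟙 (H ⊗ H) := by
        rw [braiding_naturality_right]
    _ = comul ≫ ((ρ_ H).inv ≫ H ◁ unit ≫ mul) ▷ H := by
        rw [braiding_tensorUnit_right]; monoidal
    _ = comul := by rw [h_ru]; simp

theorem yd_prime (H : C) (mul : H ⊗ H ⟶ H) (unit : 𝟙_ C ⟶ H)
    (comul : H ⟶ H ⊗ H) (counit : H ⟶ 𝟙_ C)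
    (h_ru : (ρ_ H).inv ≫ H ◁ unit ≫ mul = 𝟙 H)
    (h_rcu : comul ≫ H ◁ counit ≫ (ρ_ H).hom = 𝟙 H)
    (X : C) (ν : H ⊗ X ⟶ X) (l : X ⟶ H ⊗ X)
    (hYD : ydPsi H X comul ν ≫ (ρ_ (X ⊗ H)).inv ≫ (X ⊗ H) ◁ unit ≫
        (α_ X H H).hom ≫ X ◁ bialgLam H mul comul ≫ (α_ X H H).inv ≫
        ydPhi H X mul l ▷ H ≫ (α_ H X H).hom ≫ H ◁ (X ◁ counit ≫ (ρ_ X).hom)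
      = H ◁ l ≫ (α_ H H X).inv ≫ bialgLam H mul comul ▷ X ≫ (α_ H H X).hom ≫
          H ◁ ν) :
    ydPsi H X comul ν ≫ ydPhi H X mul l
      = H ◁ l ≫ (α_ H H X).inv ≫ bialgLam H mul comul ▷ X ≫ (α_ H H X).hom ≫
          H ◁ ν := by
  have u1 : X ◁ comul = X ◁ ((ρ_ H).inv ≫ H ◁ unit ≫ bialgLam H mul comul) := by
    rw [lam_unit H mul unit comul h_ru]
  calc ydPsi H X comul ν ≫ ydPhi H X mul l
      = ydPsi H X comul ν ≫ X ◁ (comul ≫ H ◁ counit ≫ (ρ_ H).hom) ≫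
          ydPhi H X mul l := by
        rw [h_rcu, MonoidalCategory.whiskerLeft_id, id_comp]
    _ = 𝟙 (H ⊗ X) ⊗≫ (ydPsi H X comul ν ≫ X ◁ comul) ⊗≫
          ((X ⊗ H) ◁ counit ≫ ydPhi H X mul l ▷ 𝟙_ C) ⊗≫ 𝟙 (H ⊗ X) := by
        monoidal
    _ = 𝟙 (H ⊗ X) ⊗≫ (ydPsi H X comul ν ≫ X ◁ comul) ⊗≫
          (ydPhi H X mul l ▷ H ≫ (H ⊗ X) ◁ counit) ⊗≫ 𝟙 (H ⊗ X) := by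
        rw [whisker_exchange]
    _ = 𝟙 (H ⊗ X) ⊗≫ (ydPsi H X comul ν ≫
          X ◁ ((ρ_ H).inv ≫ H ◁ unit ≫ bialgLam H mul comul)) ⊗≫
          (ydPhi H X mul l ▷ H ≫ (H ⊗ X) ◁ counit) ⊗≫ 𝟙 (H ⊗ X) := by
        rw [u1]
    _ = ydPsi H X comul ν ≫ (ρ_ (X ⊗ H)).inv ≫ (X ⊗ H) ◁ unit ≫
        (α_ X H H).hom ≫ X ◁ bialgLam H mul comul ≫ (α_ X H H).inv ≫
        ydPhi H X mul l ▷ H ≫ (α_ H X H).hom ≫ H ◁ (X ◁ counit ≫ (ρ_ X).hom) := by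
        monoidal
    _ = H ◁ l ≫ (α_ H H X).inv ≫ bialgLam H mul comul ▷ X ≫ (α_ H H X).hom ≫
        H ◁ ν := hYD

theorem halfL (H : C) (mul : H ⊗ H ⟶ H) (comul : H ⟶ H ⊗ H)
    (h_assoc : (α_ H H H).inv ≫ mul ▷ H ≫ mul = H ◁ mul ≫ mul)
    (h_coassoc : comul ≫ comul ▷ H ≫ (α_ H H H).hom = comul ≫ H ◁ comul)
    (X : C) (ν : H ⊗ X ⟶ X) (l : X ⟶ H ⊗ X)
    (hYD' : ydPsi H X comul ν ≫ ydPhi H X mul l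
      = H ◁ l ≫ (α_ H H X).inv ≫ bialgLam H mul comul ▷ X ≫ (α_ H H X).hom ≫
          H ◁ ν) :
    ydPsi H X comul ν ▷ H ≫ (α_ X H H).hom ≫ X ◁ bialgLam H mul comul ≫
        (α_ X H H).inv ≫ ydPhi H X mul l ▷ H
      = comul ▷ X ▷ H ⊗≫ (H ⊗ H) ◁ l ▷ H ⊗≫ H ◁ (β_ H H).hom ▷ X ▷ H ⊗≫
        (H ⊗ H ⊗ H) ◁ (β_ X H).hom ⊗≫ (H ⊗ H) ◁ (β_ H H).hom ▷ X ⊗≫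
        bialgLam H mul comul ▷ H ▷ H ▷ X ⊗≫ H ◁ (β_ H H).hom ▷ H ▷ X ⊗≫
        (H ⊗ H ⊗ H) ◁ (β_ H X).hom ⊗≫ (H ⊗ H) ◁ ν ▷ H ⊗≫ mul ▷ X ▷ H := by
  calc ydPsi H X comul ν ▷ H ≫ (α_ X H H).hom ≫ X ◁ bialgLam H mul comul ≫
        (α_ X H H).inv ≫ ydPhi H X mul l ▷ H
      = 𝟙 ((H ⊗ X) ⊗ H) ⊗≫ (ydPsi H X comul ν ≫ X ◁ comul) ▷ H ⊗≫
          (X ⊗ H) ◁ (β_ H H).hom ⊗≫ X ◁ mul ▷ H ⊗≫ ydPhi H X mul l ▷ H ⊗≫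
          𝟙 ((H ⊗ X) ⊗ H) := by
        simp only [bialgLam]; monoidal
    _ = 𝟙 ((H ⊗ X) ⊗ H) ⊗≫ comul ▷ X ▷ H ⊗≫ H ◁ (β_ H X).hom ▷ H ⊗≫
          ydPsi H X comul ν ▷ H ▷ H ⊗≫ (X ⊗ H) ◁ (β_ H H).hom ⊗≫
          (X ◁ mul ≫ ydPhi H X mul l) ▷ H ⊗≫ 𝟙 ((H ⊗ X) ⊗ H) := by
        rw [psi_comul H comul h_coassoc X ν]; monoidal
    _ = 𝟙 ((H ⊗ X) ⊗ H) ⊗≫ comul ▷ X ▷ H ⊗≫ H ◁ (β_ H X).hom ▷ H ⊗≫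
          ydPsi H X comul ν ▷ H ▷ H ⊗≫
          ((X ⊗ H) ◁ (β_ H H).hom ≫ ydPhi H X mul l ▷ (H ⊗ H)) ⊗≫
          H ◁ (β_ X H).hom ▷ H ⊗≫ mul ▷ X ▷ H ⊗≫ 𝟙 ((H ⊗ X) ⊗ H) := by
        rw [phi_mul H mul h_assoc X l]; monoidal
    _ = 𝟙 ((H ⊗ X) ⊗ H) ⊗≫ comul ▷ X ▷ H ⊗≫ H ◁ (β_ H X).hom ▷ H ⊗≫
          (ydPsi H X comul ν ≫ ydPhi H X mul l) ▷ H ▷ H ⊗≫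
          (H ⊗ X) ◁ (β_ H H).hom ⊗≫
          H ◁ (β_ X H).hom ▷ H ⊗≫ mul ▷ X ▷ H ⊗≫ 𝟙 ((H ⊗ X) ⊗ H) := by
        rw [whisker_exchange (ydPhi H X mul l) ((β_ H H).hom)]; monoidal
    _ = 𝟙 ((H ⊗ X) ⊗ H) ⊗≫ comul ▷ X ▷ H ⊗≫
          H ◁ ((β_ H X).hom ≫ l ▷ H) ▷ H ⊗≫
          bialgLam H mul comul ▷ X ▷ H ▷ H ⊗≫ H ◁ ν ▷ H ▷ H ⊗≫
          (H ⊗ X) ◁ (β_ H H).hom ⊗≫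
          H ◁ (β_ X H).hom ▷ H ⊗≫ mul ▷ X ▷ H ⊗≫ 𝟙 ((H ⊗ X) ⊗ H) := by
        rw [hYD']; monoidal
    _ = 𝟙 ((H ⊗ X) ⊗ H) ⊗≫ comul ▷ X ▷ H ⊗≫
          H ◁ (H ◁ l ≫ (β_ H (H ⊗ X)).hom) ▷ H ⊗≫
          bialgLam H mul comul ▷ X ▷ H ▷ H ⊗≫ H ◁ ν ▷ H ▷ H ⊗≫
          (H ⊗ X) ◁ (β_ H H).hom ⊗≫
          H ◁ (β_ X H).hom ▷ H ⊗≫ mul ▷ X ▷ H ⊗≫ 𝟙 ((H ⊗ X) ⊗ H) := by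
        rw [← braiding_naturality_right H l]
    _ = 𝟙 ((H ⊗ X) ⊗ H) ⊗≫ comul ▷ X ▷ H ⊗≫ (H ⊗ H) ◁ l ▷ H ⊗≫
          H ◁ (β_ H H).hom ▷ X ▷ H ⊗≫
          ((H ⊗ H) ◁ ((β_ H X).hom ▷ H) ≫
            bialgLam H mul comul ▷ ((X ⊗ H) ⊗ H)) ⊗≫
          H ◁ ν ▷ H ▷ H ⊗≫ (H ⊗ X) ◁ (β_ H H).hom ⊗≫
          H ◁ (β_ X H).hom ▷ H ⊗≫ mul ▷ X ▷ H ⊗≫ 𝟙 ((H ⊗ X) ⊗ H) := by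
        rw [braiding_tensor_right_hom H H X]; monoidal
    _ = 𝟙 ((H ⊗ X) ⊗ H) ⊗≫ comul ▷ X ▷ H ⊗≫ (H ⊗ H) ◁ l ▷ H ⊗≫
          H ◁ (β_ H H).hom ▷ X ▷ H ⊗≫ bialgLam H mul comul ▷ H ▷ X ▷ H ⊗≫
          (H ⊗ H) ◁ (β_ H X).hom ▷ H ⊗≫
          H ◁ (ν ▷ (H ⊗ H) ≫ X ◁ (β_ H H).hom) ⊗≫
          H ◁ (β_ X H).hom ▷ H ⊗≫ mul ▷ X ▷ H ⊗≫ 𝟙 ((H ⊗ X) ⊗ H) := by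
        rw [whisker_exchange (bialgLam H mul comul) ((β_ H X).hom ▷ H)]; monoidal
    _ = 𝟙 ((H ⊗ X) ⊗ H) ⊗≫ comul ▷ X ▷ H ⊗≫ (H ⊗ H) ◁ l ▷ H ⊗≫
          H ◁ (β_ H H).hom ▷ X ▷ H ⊗≫ bialgLam H mul comul ▷ H ▷ X ▷ H ⊗≫
          (H ⊗ H) ◁ (β_ H X).hom ▷ H ⊗≫ (H ⊗ H ⊗ X) ◁ (β_ H H).hom ⊗≫
          H ◁ ((ν ▷ H ≫ (β_ X H).hom) ▷ H) ⊗≫ mul ▷ X ▷ H ⊗≫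
          𝟙 ((H ⊗ X) ⊗ H) := by
        rw [← whisker_exchange ν ((β_ H H).hom)]; monoidal
    _ = 𝟙 ((H ⊗ X) ⊗ H) ⊗≫ comul ▷ X ▷ H ⊗≫ (H ⊗ H) ◁ l ▷ H ⊗≫
          H ◁ (β_ H H).hom ▷ X ▷ H ⊗≫ bialgLam H mul comul ▷ H ▷ X ▷ H ⊗≫
          (H ⊗ H) ◁ (β_ H X).hom ▷ H ⊗≫ (H ⊗ H ⊗ X) ◁ (β_ H H).hom ⊗≫
          H ◁ (((β_ (H ⊗ X) H).hom ≫ H ◁ ν) ▷ H) ⊗≫ mul ▷ X ▷ H ⊗≫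
          𝟙 ((H ⊗ X) ⊗ H) := by
        rw [← braiding_naturality_left ν H]
    _ = 𝟙 ((H ⊗ X) ⊗ H) ⊗≫ comul ▷ X ▷ H ⊗≫ (H ⊗ H) ◁ l ▷ H ⊗≫
          H ◁ (β_ H H).hom ▷ X ▷ H ⊗≫ bialgLam H mul comul ▷ H ▷ X ▷ H ⊗≫
          (H ⊗ H) ◁
            ((β_ H X).hom ▷ H ⊗≫ X ◁ (β_ H H).hom ⊗≫ (β_ X H).hom ▷ H) ⊗≫
          H ◁ (β_ H H).hom ▷ X ▷ H ⊗≫ (H ⊗ H) ◁ ν ▷ H ⊗≫ mul ▷ X ▷ H ⊗≫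
          𝟙 ((H ⊗ X) ⊗ H) := by
        rw [braiding_tensor_left_hom H X H]; monoidal
    _ = 𝟙 ((H ⊗ X) ⊗ H) ⊗≫ comul ▷ X ▷ H ⊗≫ (H ⊗ H) ◁ l ▷ H ⊗≫
          H ◁ (β_ H H).hom ▷ X ▷ H ⊗≫ bialgLam H mul comul ▷ H ▷ X ▷ H ⊗≫
          (H ⊗ H ⊗ H) ◁ (β_ X H).hom ⊗≫ (H ⊗ H) ◁ (β_ H H).hom ▷ X ⊗≫
          ((H ⊗ (H ⊗ H)) ◁ (β_ H X).hom ≫ (H ◁ (β_ H H).hom) ▷ (X ⊗ H)) ⊗≫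
          (H ⊗ H) ◁ ν ▷ H ⊗≫ mul ▷ X ▷ H ⊗≫ 𝟙 ((H ⊗ X) ⊗ H) := by
        rw [yang_baxter']; monoidal
    _ = 𝟙 ((H ⊗ X) ⊗ H) ⊗≫ comul ▷ X ▷ H ⊗≫ (H ⊗ H) ◁ l ▷ H ⊗≫
          H ◁ (β_ H H).hom ▷ X ▷ H ⊗≫
          (bialgLam H mul comul ▷ (H ⊗ (X ⊗ H)) ≫
            (H ⊗ H) ◁ (H ◁ (β_ X H).hom ⊗≫ (β_ H H).hom ▷ X)) ⊗≫
          H ◁ (β_ H H).hom ▷ H ▷ X ⊗≫ (H ⊗ H ⊗ H) ◁ (β_ H X).hom ⊗≫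
          (H ⊗ H) ◁ ν ▷ H ⊗≫ mul ▷ X ▷ H ⊗≫ 𝟙 ((H ⊗ X) ⊗ H) := by
        rw [whisker_exchange (H ◁ (β_ H H).hom) ((β_ H X).hom)]; monoidal
    _ = comul ▷ X ▷ H ⊗≫ (H ⊗ H) ◁ l ▷ H ⊗≫ H ◁ (β_ H H).hom ▷ X ▷ H ⊗≫
        (H ⊗ H ⊗ H) ◁ (β_ X H).hom ⊗≫ (H ⊗ H) ◁ (β_ H H).hom ▷ X ⊗≫
        bialgLam H mul comul ▷ H ▷ H ▷ X ⊗≫ H ◁ (β_ H H).hom ▷ H ▷ X ⊗≫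
        (H ⊗ H ⊗ H) ◁ (β_ H X).hom ⊗≫ (H ⊗ H) ◁ ν ▷ H ⊗≫ mul ▷ X ▷ H := by
        rw [← whisker_exchange (bialgLam H mul comul)
          (H ◁ (β_ X H).hom ⊗≫ (β_ H H).hom ▷ X)]; monoidal

theorem halfR (H : C) (mul : H ⊗ H ⟶ H) (comul : H ⟶ H ⊗ H)
    (h_assoc : (α_ H H H).inv ≫ mul ▷ H ≫ mul = H ◁ mul ≫ mul)
    (h_coassoc : comul ≫ comul ▷ H ≫ (α_ H H H).hom = comul ≫ H ◁ comul)
    (X : C) (ν : H ⊗ X ⟶ X) (l : X ⟶ H ⊗ X) :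
    (α_ H X H).hom ≫ H ◁ ydPhi H X mul l ≫ (α_ H H X).inv ≫
        bialgLam H mul comul ▷ X ≫ (α_ H H X).hom ≫ H ◁ ydPsi H X comul ν ≫
        (α_ H X H).inv
      = comul ▷ X ▷ H ⊗≫ (H ⊗ H) ◁ l ▷ H ⊗≫ H ◁ (β_ H H).hom ▷ X ▷ H ⊗≫
        (H ⊗ H ⊗ H) ◁ (β_ X H).hom ⊗≫ (H ⊗ H) ◁ (β_ H H).hom ▷ X ⊗≫
        bialgLam H mul comul ▷ H ▷ H ▷ X ⊗≫ H ◁ (β_ H H).hom ▷ H ▷ X ⊗≫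
        (H ⊗ H ⊗ H) ◁ (β_ H X).hom ⊗≫ (H ⊗ H) ◁ ν ▷ H ⊗≫ mul ▷ X ▷ H := by
  have hA : bialgLam H mul comul ≫ H ◁ comul =
      comul ▷ H ≫ (α_ H H H).hom ≫ H ◁ (β_ H H).hom ≫ (α_ H H H).inv ≫
        bialgLam H mul comul ▷ H ≫ (α_ H H H).hom :=
    psi_comul H comul h_coassoc H mul
  have hB : H ◁ mul ≫ bialgLam H mul comul =
      (α_ H H H).inv ≫ bialgLam H mul comul ▷ H ≫ (α_ H H H).hom ≫
        H ◁ (β_ H H).hom ≫ (α_ H H H).inv ≫ mul ▷ H :=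
    phi_mul H mul h_assoc H comul
  calc (α_ H X H).hom ≫ H ◁ ydPhi H X mul l ≫ (α_ H H X).inv ≫
        bialgLam H mul comul ▷ X ≫ (α_ H H X).hom ≫ H ◁ ydPsi H X comul ν ≫
        (α_ H X H).inv
      = 𝟙 ((H ⊗ X) ⊗ H) ⊗≫ H ◁ ydPhi H X mul l ⊗≫
          (bialgLam H mul comul ≫ H ◁ comul) ▷ X ⊗≫
          (H ⊗ H) ◁ (β_ H X).hom ⊗≫ H ◁ ν ▷ H ⊗≫ 𝟙 ((H ⊗ X) ⊗ H) := by
        simp only [ydPsi]; monoidal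
    _ = 𝟙 ((H ⊗ X) ⊗ H) ⊗≫ (H ◁ ydPhi H X mul l ≫ comul ▷ (H ⊗ X)) ⊗≫
          H ◁ (β_ H H).hom ▷ X ⊗≫ bialgLam H mul comul ▷ H ▷ X ⊗≫
          (H ⊗ H) ◁ (β_ H X).hom ⊗≫ H ◁ ν ▷ H ⊗≫ 𝟙 ((H ⊗ X) ⊗ H) := by
        rw [hA]; monoidal
    _ = 𝟙 ((H ⊗ X) ⊗ H) ⊗≫ comul ▷ (X ⊗ H) ⊗≫ (H ⊗ H) ◁ ydPhi H X mul l ⊗≫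
          H ◁ (β_ H H).hom ▷ X ⊗≫ bialgLam H mul comul ▷ H ▷ X ⊗≫
          (H ⊗ H) ◁ (β_ H X).hom ⊗≫ H ◁ ν ▷ H ⊗≫ 𝟙 ((H ⊗ X) ⊗ H) := by
        rw [whisker_exchange comul (ydPhi H X mul l)]; monoidal
    _ = 𝟙 ((H ⊗ X) ⊗ H) ⊗≫ comul ▷ (X ⊗ H) ⊗≫ (H ⊗ H) ◁ l ▷ H ⊗≫
          (H ⊗ H ⊗ H) ◁ (β_ X H).hom ⊗≫
          H ◁ ((H ◁ mul ≫ (β_ H H).hom) ▷ X) ⊗≫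
          bialgLam H mul comul ▷ H ▷ X ⊗≫
          (H ⊗ H) ◁ (β_ H X).hom ⊗≫ H ◁ ν ▷ H ⊗≫ 𝟙 ((H ⊗ X) ⊗ H) := by
        simp only [ydPhi]; monoidal
    _ = 𝟙 ((H ⊗ X) ⊗ H) ⊗≫ comul ▷ (X ⊗ H) ⊗≫ (H ⊗ H) ◁ l ▷ H ⊗≫
          (H ⊗ H ⊗ H) ◁ (β_ X H).hom ⊗≫
          H ◁ (((β_ H (H ⊗ H)).hom ≫ mul ▷ H) ▷ X) ⊗≫
          bialgLam H mul comul ▷ H ▷ X ⊗≫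
          (H ⊗ H) ◁ (β_ H X).hom ⊗≫ H ◁ ν ▷ H ⊗≫ 𝟙 ((H ⊗ X) ⊗ H) := by
        rw [braiding_naturality_right H mul]
    _ = 𝟙 ((H ⊗ X) ⊗ H) ⊗≫ comul ▷ (X ⊗ H) ⊗≫ (H ⊗ H) ◁ l ▷ H ⊗≫
          (H ⊗ H ⊗ H) ◁ (β_ X H).hom ⊗≫ H ◁ (β_ H H).hom ▷ H ▷ X ⊗≫
          (H ⊗ H) ◁ (β_ H H).hom ▷ X ⊗≫
          (H ◁ mul ≫ bialgLam H mul comul) ▷ H ▷ X ⊗≫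
          (H ⊗ H) ◁ (β_ H X).hom ⊗≫ H ◁ ν ▷ H ⊗≫ 𝟙 ((H ⊗ X) ⊗ H) := by
        rw [braiding_tensor_right_hom H H H]; monoidal
    _ = 𝟙 ((H ⊗ X) ⊗ H) ⊗≫ comul ▷ (X ⊗ H) ⊗≫ (H ⊗ H) ◁ l ▷ H ⊗≫
          ((H ⊗ H ⊗ H) ◁ (β_ X H).hom ≫ (H ◁ (β_ H H).hom) ▷ (H ⊗ X)) ⊗≫
          (H ⊗ H) ◁ (β_ H H).hom ▷ X ⊗≫
          bialgLam H mul comul ▷ H ▷ H ▷ X ⊗≫ H ◁ (β_ H H).hom ▷ H ▷ X ⊗≫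
          (mul ▷ (H ⊗ (H ⊗ X)) ≫ H ◁ (H ◁ (β_ H X).hom ⊗≫ ν ▷ H)) ⊗≫
          𝟙 ((H ⊗ X) ⊗ H) := by
        rw [hB]; monoidal
    _ = comul ▷ X ▷ H ⊗≫ (H ⊗ H) ◁ l ▷ H ⊗≫ H ◁ (β_ H H).hom ▷ X ▷ H ⊗≫
        (H ⊗ H ⊗ H) ◁ (β_ X H).hom ⊗≫ (H ⊗ H) ◁ (β_ H H).hom ▷ X ⊗≫
        bialgLam H mul comul ▷ H ▷ H ▷ X ⊗≫ H ◁ (β_ H H).hom ▷ H ▷ X ⊗≫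
        (H ⊗ H ⊗ H) ◁ (β_ H X).hom ⊗≫ (H ⊗ H) ◁ ν ▷ H ⊗≫ mul ▷ X ▷ H := by
        rw [whisker_exchange (H ◁ (β_ H H).hom) ((β_ X H).hom),
          ← whisker_exchange mul (H ◁ (β_ H X).hom ⊗≫ ν ▷ H)]; monoidal

/-- In a braided monoidal category `C`, every Yetter–Drinfel'd
module over a bialgebra `H` in `C` is a *strong* Yetter–Drinfel'd module in the
2-category induced by `C`, where the distributive laws are given by the braiding:
the three-strand compatibility between `ψ`, `λ` and `φ` holds. -/
theorem yd_module_in_braided_category_is_strong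
    (H : C) (mul : H ⊗ H ⟶ H) (unit : 𝟙_ C ⟶ H)
    (comul : H ⟶ H ⊗ H) (counit : H ⟶ 𝟙_ C)
    -- `H` is a monoid
    (h_assoc : (α_ H H H).inv ≫ mul ▷ H ≫ mul = H ◁ mul ≫ mul)
    (h_lu : (λ_ H).inv ≫ unit ▷ H ≫ mul = 𝟙 H)
    (h_ru : (ρ_ H).inv ≫ H ◁ unit ≫ mul = 𝟙 H)
    -- `H` is a comonoid
    (h_coassoc : comul ≫ comul ▷ H ≫ (α_ H H H).hom = comul ≫ H ◁ comul)
    (h_lcu : comul ≫ counit ▷ H ≫ (λ_ H).hom = 𝟙 H)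
    (h_rcu : comul ≫ H ◁ counit ≫ (ρ_ H).hom = 𝟙 H)
    -- bialgebra compatibilities (with respect to the braiding)
    (h_mul_comul : mul ≫ comul
      = (comul ⊗ₘ comul) ≫ (α_ H H (H ⊗ H)).hom ≫
          H ◁ ((α_ H H H).inv ≫ (β_ H H).hom ▷ H ≫ (α_ H H H).hom) ≫
          (α_ H H (H ⊗ H)).inv ≫ (mul ⊗ₘ mul))
    (h_comul_unit : unit ≫ comul = (λ_ (𝟙_ C)).inv ≫ (unit ⊗ₘ unit))
    (h_counit_mul : mul ≫ counit = (counit ⊗ₘ counit) ≫ (λ_ (𝟙_ C)).hom)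
    (h_counit_unit : unit ≫ counit = 𝟙 (𝟙_ C))
    -- a Yetter–Drinfel'd module `X`
    (X : C) (ν : H ⊗ X ⟶ X) (l : X ⟶ H ⊗ X)
    (hν_assoc : (α_ H H X).inv ≫ mul ▷ X ≫ ν = H ◁ ν ≫ ν)
    (hν_unit : (λ_ X).inv ≫ unit ▷ X ≫ ν = 𝟙 X)
    (hl_coassoc : l ≫ comul ▷ X ≫ (α_ H H X).hom = l ≫ H ◁ l)
    (hl_counit : l ≫ counit ▷ X ≫ (λ_ X).hom = 𝟙 X)
    -- the (two-strand) Yetter–Drinfel'd compatibility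
    (hYD : ydPsi H X comul ν ≫ (ρ_ (X ⊗ H)).inv ≫ (X ⊗ H) ◁ unit ≫
        (α_ X H H).hom ≫ X ◁ bialgLam H mul comul ≫ (α_ X H H).inv ≫
        ydPhi H X mul l ▷ H ≫ (α_ H X H).hom ≫ H ◁ (X ◁ counit ≫ (ρ_ X).hom)
      = H ◁ l ≫ (α_ H H X).inv ≫ bialgLam H mul comul ▷ X ≫ (α_ H H X).hom ≫
          H ◁ ν) :
    -- the strong (three-strand) compatibility
    ydPsi H X comul ν ▷ H ≫ (α_ X H H).hom ≫ X ◁ bialgLam H mul comul ≫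
        (α_ X H H).inv ≫ ydPhi H X mul l ▷ H
      = (α_ H X H).hom ≫ H ◁ ydPhi H X mul l ≫ (α_ H H X).inv ≫
          bialgLam H mul comul ▷ X ≫ (α_ H H X).hom ≫ H ◁ ydPsi H X comul ν ≫
          (α_ H X H).inv := by
  have hYD2 : ydPsi H X comul ν ≫ ydPhi H X mul l
      = H ◁ l ≫ (α_ H H X).inv ≫ bialgLam H mul comul ▷ X ≫ (α_ H H X).hom ≫
          H ◁ ν :=
    yd_prime H mul unit comul counit h_ru h_rcu X ν l hYD
  calc ydPsi H X comul ν ▷ H ≫ (α_ X H H).hom ≫ X ◁ bialgLam H mul comul ≫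
        (α_ X H H).inv ≫ ydPhi H X mul l ▷ H
      = comul ▷ X ▷ H ⊗≫ (H ⊗ H) ◁ l ▷ H ⊗≫ H ◁ (β_ H H).hom ▷ X ▷ H ⊗≫
        (H ⊗ H ⊗ H) ◁ (β_ X H).hom ⊗≫ (H ⊗ H) ◁ (β_ H H).hom ▷ X ⊗≫
        bialgLam H mul comul ▷ H ▷ H ▷ X ⊗≫ H ◁ (β_ H H).hom ▷ H ▷ X ⊗≫
        (H ⊗ H ⊗ H) ◁ (β_ H X).hom ⊗≫ (H ⊗ H) ◁ ν ▷ H ⊗≫ mul ▷ X ▷ H :=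
      halfL H mul comul h_assoc h_coassoc X ν l hYD2
    _ = (α_ H X H).hom ≫ H ◁ ydPhi H X mul l ≫ (α_ H H X).inv ≫
          bialgLam H mul comul ▷ X ≫ (α_ H H X).hom ≫ H ◁ ydPsi H X comul ν ≫
          (α_ H X H).inv :=
      (halfR H mul comul h_assoc h_coassoc X ν l).symm


end Paper
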